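/- Let S = (S^{(1)}, ..., S^{(n)}) be a group-like element of the truncated tensor algebra over an algebraically closed field K of characteristic 0 whose coordinates σ_I are all nonzero. Then S is uniquely determined by its top component T = S^{(n)} together with a choice of an n-th root of n!·σ_{11...1}; consequently the projection from G_{d,n} to the degree-n component is generically n-to-1. Over ℝ, the map is generically 1-to-1 when n is odd and 2-to-1 when n is even. -/

import Mathlib

open scoped BigOperators

section TruncatedTensorAlgebra

variable {K : Type*} [Field K] {d : ℕ}

/-- Concatenation (tensor) product on the tensor algebra, modelled as functions on words. -/
def tmul (f g : List (Fin d) → K) : List (Fin d) → K :=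
  fun l => ∑ i ∈ Finset.range (l.length + 1), f (l.take i) * g (l.drop i)

/-- Truncation: kill all coordinates indexed by words of length `> n`. -/
def trunc (n : ℕ) (f : List (Fin d) → K) : List (Fin d) → K :=
  fun l => if l.length ≤ n then f l else 0

/-- The product of the truncated tensor algebra `T^n(K^d)`. -/
def tmulT (n : ℕ) (f g : List (Fin d) → K) : List (Fin d) → K :=
  trunc n (tmul f g)

/-- The Lie bracket `[f,g] = f ⊗ g - g ⊗ f` in the truncated tensor algebra. -/
def lieT (n : ℕ) (f g : List (Fin d) → K) : List (Fin d) → K :=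
  tmulT n f g - tmulT n g f

/-- The generator `e_i` of the tensor algebra. -/
def gen (i : Fin d) : List (Fin d) → K := fun l => if l = [i] then 1 else 0

/-- The unit `1` of the tensor algebra. -/
def tone : List (Fin d) → K := fun l => if l = [] then 1 else 0

/-- `InLie d n K P` says that `P` belongs to the free Lie algebra `Lie^n(K^d)`, the
smallest Lie subalgebra of `T^n(K^d)` containing the generators `e_1, …, e_d`. -/
inductive InLie (d n : ℕ) (K : Type*) [Field K] : (List (Fin d) → K) → Prop
  | gen (i : Fin d) : InLie d n K (gen i)
  | zero : InLie d n K 0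
  | add {f g : List (Fin d) → K} : InLie d n K f → InLie d n K g → InLie d n K (f + g)
  | smul (c : K) {f : List (Fin d) → K} : InLie d n K f → InLie d n K (c • f)
  | bracket {f g : List (Fin d) → K} :
      InLie d n K f → InLie d n K g → InLie d n K (lieT n f g)

/-- Powers in the truncated tensor algebra. -/
def powT (n : ℕ) (f : List (Fin d) → K) : ℕ → (List (Fin d) → K)
  | 0 => tone
  | r + 1 => tmulT n f (powT n f r)

/-- The tensor exponential `exp(f) = ∑ f^{⊗ r}/r!` in `T^n(K^d)`. -/
noncomputable def texp (n : ℕ) (f : List (Fin d) → K) : List (Fin d) → K :=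
  ∑ r ∈ Finset.range (n + 1), ((r.factorial : K)⁻¹) • powT n f r

/-- The tensor logarithm `log(1 + Q) = ∑_{r ≥ 1} (-1)^{r-1} Q^{⊗ r}/r` in `T^n(K^d)`. -/
noncomputable def tlog (n : ℕ) (f : List (Fin d) → K) : List (Fin d) → K :=
  ∑ r ∈ Finset.Icc 1 n, (((-1 : K) ^ (r - 1)) / (r : K)) • powT n (f - tone) r

/-- The multiset of shuffles (interleavings) of two words. -/
def shuffles {α : Type*} : List α → List α → Multiset (List α)
  | [], l => {l}
  | l, [] => {l}
  | a :: as, b :: bs =>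
      ((shuffles as (b :: bs)).map (a :: ·)) + ((shuffles (a :: as) bs).map (b :: ·))
  termination_by l₁ l₂ => l₁.length + l₂.length
  decreasing_by
    all_goals simp only [List.length_cons]
    all_goals omega

/-- The shuffle linear form `σ_{I ⧢ J}` evaluated on a tensor `P`. -/
def shuffleForm (P : List (Fin d) → K) (I J : List (Fin d)) : K :=
  ((shuffles I J).map P).sum

end TruncatedTensorAlgebra

/-- A word is a Lyndon word if it is nonempty and strictly lexicographically smaller
than each of its proper rotations. -/
def IsLyndon {α : Type*} [LinearOrder α] (l : List α) : Prop :=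
  l ≠ [] ∧ ∀ k : ℕ, 0 < k → k < l.length → l < l.rotate k

open Classical in
/-- The length of the longest proper Lyndon suffix of a word. -/
noncomputable def suffixLen {d : ℕ} (l : List (Fin d)) : ℕ :=
  Nat.findGreatest (fun j => IsLyndon (l.drop (l.length - j))) (l.length - 1)

/-- Fuel-based recursion computing the Lyndon bracketing `b(I)`:
`b(i) = e_i` and `b(I) = [b(I₁), b(I₂)]` where `I = I₁I₂` with `I₂` the longest proper
Lyndon right factor of `I`. -/
noncomputable def bracketingFuel (K : Type*) [Field K] {d : ℕ} (n : ℕ) :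
    ℕ → List (Fin d) → (List (Fin d) → K)
  | _, [i] => gen i
  | fuel + 1, l =>
      let m := min (max 1 (suffixLen l)) (l.length - 1)
      lieT n (bracketingFuel K n fuel (l.take (l.length - m)))
             (bracketingFuel K n fuel (l.drop (l.length - m)))
  | 0, _ => 0

/-- The Lyndon bracketing `b(I)` of a word `I`, as an element of `T^n(K^d)`. -/
noncomputable def bracketing (K : Type*) [Field K] {d : ℕ} (n : ℕ) (l : List (Fin d)) :
    List (Fin d) → K :=
  bracketingFuel K n l.length l

/-- Group-like elements of the truncated tensor algebra `T^n(K^d)`: constant term `1`,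
truncated beyond degree `n`, and multiplicative under shuffle forms. -/
def GroupLikeT (d n : ℕ) (K : Type*) [Field K] (S : List (Fin d) → K) : Prop :=
  S [] = 1 ∧ (∀ l : List (Fin d), n < l.length → S l = 0) ∧
  ∀ I J : List (Fin d), I.length + J.length ≤ n → shuffleForm S I J = S I * S J


section Helpers

lemma shuffles_nil_left {α : Type*} (l : List α) : shuffles [] l = {l} := by
  cases l <;> rw [shuffles]

lemma shuffles_nil_right {α : Type*} (l : List α) : shuffles l [] = {l} := by
  cases l with
  | nil => rw [shuffles]
  | cons a as => rw [shuffles]; simp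

lemma shuffles_cons_cons {α : Type*} (a b : α) (as bs : List α) :
    shuffles (a :: as) (b :: bs) =
      ((shuffles as (b :: bs)).map (a :: ·)) + ((shuffles (a :: as) bs).map (b :: ·)) := by
  rw [shuffles]

lemma length_of_mem_shuffles {α : Type*} :
    ∀ (I J x : List α), x ∈ shuffles I J → x.length = I.length + J.length := by
  intro I
  induction I with
  | nil =>
    intro J x hx
    rw [shuffles_nil_left] at hx
    simp_all
  | cons a as ih =>
    intro J
    induction J with
    | nil =>
      intro x hx
      rw [shuffles_nil_right] at hx
      simp_all
    | cons b bs ihJ =>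
      intro x hx
      rw [shuffles_cons_cons] at hx
      rcases Multiset.mem_add.1 hx with h | h <;>
        obtain ⟨y, hy, rfl⟩ := Multiset.mem_map.1 h
      · have := ih _ _ hy; simp [this]; omega
      · have := ihJ _ hy; simp at this ⊢; omega

lemma shuffles_replicate {α : Type*} (i : α) (k : ℕ) :
    shuffles (List.replicate k i) [i]
      = Multiset.replicate (k + 1) (List.replicate (k + 1) i) := by
  induction k with
  | zero => simp [shuffles_nil_left]
  | succ k ih =>
    rw [List.replicate_succ, shuffles_cons_cons, shuffles_nil_right, ih]
    simp only [Multiset.map_replicate, Multiset.map_singleton, ← List.replicate_succ]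
    rw [show ({List.replicate (k+1+1) i} : Multiset (List α))
        = Multiset.replicate 1 (List.replicate (k+1+1) i) from (Multiset.replicate_one _).symm,
      ← Multiset.replicate_add]

variable {K : Type*} [Field K] {d : ℕ}

lemma grouplike_pow {n : ℕ} {S : List (Fin d) → K} (hS : GroupLikeT d n K S) (i : Fin d) :
    ∀ k, k ≤ n → S [i] ^ k = (k.factorial : K) * S (List.replicate k i) := by
  intro k
  induction k with
  | zero => simp [hS.1]
  | succ k ih =>
    intro hk
    have h1 := hS.2.2 (List.replicate k i) [i] (by simp; omega)
    rw [shuffleForm, shuffles_replicate, Multiset.map_replicate, Multiset.sum_replicate,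
      nsmul_eq_mul] at h1
    have h2 := ih (by omega)
    rw [pow_succ, h2, mul_assoc, ← h1, Nat.factorial_succ]
    push_cast
    ring

lemma grouplike_uniq {n : ℕ} (hn : 1 ≤ n) {S S' : List (Fin d) → K}
    (hS : GroupLikeT d n K S) (hS' : GroupLikeT d n K S') (i : Fin d)
    (h0 : S [i] ≠ 0)
    (htop : ∀ l : List (Fin d), l.length = n → S l = S' l)
    (h1 : S [i] = S' [i]) : S = S' := by
  have key : ∀ m : ℕ, ∀ l : List (Fin d), n ≤ l.length + m → S l = S' l := by
    intro m
    induction m with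
    | zero =>
      intro l hl
      rcases eq_or_lt_of_le (by omega : n ≤ l.length) with h | h
      · exact htop l h.symm
      · rw [hS.2.1 l h, hS'.2.1 l h]
    | succ m ih =>
      intro l hl
      by_cases hcase : n ≤ l.length + m
      · exact ih l hcase
      · have hlen : l.length + 1 ≤ n := by omega
        have e1 := hS.2.2 l [i] (by simpa using hlen)
        have e2 := hS'.2.2 l [i] (by simpa using hlen)
        have hmid : shuffleForm S l [i] = shuffleForm S' l [i] := by
          unfold shuffleForm
          refine congrArg Multiset.sum (Multiset.map_congr rfl ?_)
          intro x hx
          have hxl := length_of_mem_shuffles _ _ _ hx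
          simp only [List.length_singleton] at hxl
          exact ih x (by omega)
        have := e1.symm.trans (hmid.trans e2)
        rw [← h1] at this
        exact mul_right_cancel₀ h0 this
  funext l
  exact key n l (by omega)

/-- Rescaling of a tensor by `c` in degree `k`. -/
def scaleS (c : K) (S : List (Fin d) → K) : List (Fin d) → K :=
  fun l => c ^ l.length * S l

lemma shuffleForm_scale (c : K) (S : List (Fin d) → K) (I J : List (Fin d)) :
    shuffleForm (scaleS c S) I J = c ^ (I.length + J.length) * shuffleForm S I J := by
  unfold shuffleForm scaleS
  rw [← Multiset.sum_map_mul_left]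
  refine congrArg Multiset.sum (Multiset.map_congr rfl ?_)
  intro x hx
  rw [length_of_mem_shuffles _ _ _ hx]

lemma grouplike_scale {n : ℕ} {S : List (Fin d) → K} (hS : GroupLikeT d n K S)
    {c : K} (hc : c ^ n = 1) : GroupLikeT d n K (scaleS c S) := by
  refine ⟨by simp [scaleS, hS.1], fun l hl => by simp [scaleS, hS.2.1 l hl],
    fun I J hIJ => ?_⟩
  rw [shuffleForm_scale, hS.2.2 I J hIJ]
  simp only [scaleS, List.length_append]
  rw [pow_add]
  ring

lemma grouplike_fiber_eq {n : ℕ} (hn : 1 ≤ n) [NeZero d] {S : List (Fin d) → K}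
    (hS : GroupLikeT d n K S) (hnz : ∀ l : List (Fin d), l.length ≤ n → S l ≠ 0) :
    {S' : List (Fin d) → K | GroupLikeT d n K S' ∧
        ∀ l : List (Fin d), l.length = n → S' l = S l}
      = (fun c => scaleS c S) '' {c : K | c ^ n = 1} := by
  have h0 : S [(0 : Fin d)] ≠ 0 := hnz _ (by simpa using hn)
  ext S'
  constructor
  · rintro ⟨hS', htop⟩
    have hrep : (List.replicate n (0 : Fin d)).length = n := by simp
    have heq : S' [(0 : Fin d)] ^ n = S [(0 : Fin d)] ^ n := by
      rw [grouplike_pow hS 0 n le_rfl, grouplike_pow hS' 0 n le_rfl, htop _ hrep]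
    have h0' : S' [(0 : Fin d)] ≠ 0 := by
      intro h
      rw [h, zero_pow (by omega)] at heq
      exact pow_ne_zero n h0 heq.symm
    have hc : (S' [(0 : Fin d)] / S [(0 : Fin d)]) ^ n = 1 := by
      simp only [div_pow, heq, div_self (pow_ne_zero n h0)]
    refine ⟨S' [(0 : Fin d)] / S [(0 : Fin d)], hc, ?_⟩
    refine grouplike_uniq hn (grouplike_scale hS hc) hS' 0 ?_ ?_ ?_
    · simp only [scaleS, List.length_singleton, pow_one]
      exact mul_ne_zero (div_ne_zero h0' h0) h0
    · intro l hl
      simp only [scaleS, hl, hc, one_mul]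
      exact (htop l hl).symm
    · simp only [scaleS, List.length_singleton, pow_one]
      field_simp
  · rintro ⟨c, hc, rfl⟩
    simp only [Set.mem_setOf_eq] at hc
    refine ⟨grouplike_scale hS hc, fun l hl => ?_⟩
    simp [scaleS, hl, hc]

lemma grouplike_fiber_ncard {n : ℕ} (hn : 1 ≤ n) [NeZero d] {S : List (Fin d) → K}
    (hS : GroupLikeT d n K S) (hnz : ∀ l : List (Fin d), l.length ≤ n → S l ≠ 0) :
    Set.ncard {S' : List (Fin d) → K | GroupLikeT d n K S' ∧
        ∀ l : List (Fin d), l.length = n → S' l = S l}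
      = Set.ncard {c : K | c ^ n = 1} := by
  rw [grouplike_fiber_eq hn hS hnz]
  refine Set.ncard_image_of_injOn ?_
  intro c₁ _ c₂ _ h
  have h0 : S [(0 : Fin d)] ≠ 0 := hnz _ (by simpa using hn)
  have := congrFun h [(0 : Fin d)]
  simp only [scaleS, List.length_singleton, pow_one] at this
  exact mul_right_cancel₀ h0 this

end Helpers

/-- A group-like element `S` with all coordinates nonzero is uniquely determined by its
top (degree `n`) component together with the choice of the coordinate `σ₁` (an `n`-th
root of `n!·σ_{1⋯1}`); consequently the projection from `G_{d,n}` to the degree-`n`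
component is generically `n`-to-`1` over an algebraically closed field of characteristic
zero, and over `ℝ` it is generically `1`-to-`1` for odd `n` and `2`-to-`1` for even `n`. -/
theorem grouplike_determined_by_top (K : Type*) [Field K] [IsAlgClosed K] [CharZero K]
    (d n : ℕ) [NeZero d] (hn : 1 ≤ n) :
    (∀ S S' : List (Fin d) → K, GroupLikeT d n K S → GroupLikeT d n K S' →
      (∀ l : List (Fin d), l.length ≤ n → S l ≠ 0) →
      (∀ l : List (Fin d), l.length = n → S l = S' l) →
      S [(0 : Fin d)] = S' [(0 : Fin d)] → S = S') ∧
    (∀ S : List (Fin d) → K, GroupLikeT d n K S →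
      (∀ l : List (Fin d), l.length ≤ n → S l ≠ 0) →
      Set.ncard {S' : List (Fin d) → K | GroupLikeT d n K S' ∧
        ∀ l : List (Fin d), l.length = n → S' l = S l} = n) ∧
    (∀ S : List (Fin d) → ℝ, GroupLikeT d n ℝ S →
      (∀ l : List (Fin d), l.length ≤ n → S l ≠ 0) →
      Set.ncard {S' : List (Fin d) → ℝ | GroupLikeT d n ℝ S' ∧
        ∀ l : List (Fin d), l.length = n → S' l = S l} = if Odd n then 1 else 2) := by
  refine ⟨?_, ?_, ?_⟩
  · intro S S' hS hS' hnz htop h1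
    exact grouplike_uniq hn hS hS' 0 (hnz _ (by simpa using hn)) htop h1
  · intro S hS hnz
    rw [grouplike_fiber_ncard hn hS hnz]
    haveI : NeZero ((n : K)) := ⟨Nat.cast_ne_zero.mpr (by omega)⟩
    obtain ⟨ζ, hζ⟩ := HasEnoughRootsOfUnity.exists_primitiveRoot K n
    have hset : {c : K | c ^ n = 1} = ↑(Polynomial.nthRootsFinset n (1 : K)) := by
      ext x
      simp [Polynomial.mem_nthRootsFinset (by omega : 0 < n)]
    rw [hset, Set.ncard_coe_finset, hζ.card_nthRootsFinset]
  · intro S hS hnz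
    rw [grouplike_fiber_ncard hn hS hnz]
    by_cases hodd : Odd n
    · have hset : {c : ℝ | c ^ n = 1} = {1} := by
        ext x
        simp only [Set.mem_setOf_eq, Set.mem_singleton_iff,
          pow_eq_one_iff_of_ne_zero (by omega : n ≠ 0)]
        constructor
        · rintro (h | ⟨h, he⟩)
          · exact h
          · exact absurd hodd (Nat.not_odd_iff_even.mpr he)
        · intro h; exact Or.inl h
      rw [hset, if_pos hodd, Set.ncard_singleton]
    · have hset : {c : ℝ | c ^ n = 1} = {1, -1} := by
        ext x
        simp only [Set.mem_setOf_eq, Set.mem_insert_iff, Set.mem_singleton_iff,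
          pow_eq_one_iff_of_ne_zero (by omega : n ≠ 0)]
        constructor
        · rintro (h | ⟨h, _⟩)
          · exact Or.inl h
          · exact Or.inr h
        · rintro (h | h)
          · exact Or.inl h
          · exact Or.inr ⟨h, Nat.not_odd_iff_even.mp hodd⟩
      rw [hset, if_neg hodd, Set.ncard_pair (by norm_num : (1:ℝ) ≠ -1)]
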